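/- For every w ∈ W, in the twisted group algebra Q^{KK}_{t1,t2}(W) one has Δ_w = ∑_{u ≤ w} p(u,w) y_u, where Δ_w := A(w) δ_w with A(w) := ∏_{β ∈ R(w)} (t1 + t2 e^{−β})/(1 − e^{β}) and R(w) is the inversion set of w. Equivalently, the Q_{t1,t2}(Λ)-module isomorphism Φ: Q^{KK}_{t1,t2}(W) → H defined by Φ(y_w) = h_w satisfies Φ(Δ_w) = Y_w. -/

import Mathlib

open CoxeterSystem

/-- The multiplicative group structure (composition) that `AddAut M` carried in the older
Mathlib; it is now an additive group. -/
instance addAutCompGroup (M : Type*) [Add M] : Group (AddAut M) where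
  mul g h := AddEquiv.trans h g
  one := AddEquiv.refl _
  inv := AddEquiv.symm
  mul_assoc _ _ _ := rfl
  one_mul _ := rfl
  mul_one _ := rfl
  inv_mul_cancel := AddEquiv.self_trans_symm

/-- `E(λ) = e^{-λ} - 1`. -/
noncomputable def Eelt {Λ : Type*} [AddCommGroup Λ] {K : Type*} [Field K]
    (exp : Multiplicative Λ →* Kˣ) (lam : Λ) : K :=
  ((exp (Multiplicative.ofAdd (-lam)) : Kˣ) : K) - 1

/-- `p(w,v)`: the coefficient of `h_w` in the expansion `Y_v = ∑_w p(w,v) h_w` of the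
Yang–Baxter basis element `Y_v` in the standard basis (`hb w = h w`). -/
noncomputable def pCoeff {W : Type*} {K : Type*} [Field K] {H : Type*} [Ring H] [Algebra K H]
    (hb : Module.Basis W K H) (Y : W → H) (w v : W) : K :=
  hb.repr (Y v) w

/-- `A_i = (t1 + t2 e^{-α})/(1 - e^{α})` (as a function of the root `α`). -/
noncomputable def Acoef {Λ : Type*} [AddCommGroup Λ] {K : Type*} [Field K]
    (exp : Multiplicative Λ →* Kˣ) (t1 t2 : K) (a : Λ) : K :=
  (t1 + t2 * ((exp (Multiplicative.ofAdd (-a)) : Kˣ) : K)) /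
    (1 - ((exp (Multiplicative.ofAdd a) : Kˣ) : K))

/-- `B_i = (t1 + t2)/(1 - e^{-α})` (as a function of the root `α`). -/
noncomputable def Bcoef {Λ : Type*} [AddCommGroup Λ] {K : Type*} [Field K]
    (exp : Multiplicative Λ →* Kˣ) (t1 t2 : K) (a : Λ) : K :=
  (t1 + t2) / (1 - ((exp (Multiplicative.ofAdd (-a)) : Kˣ) : K))

/-- The generic Demazure–Lusztig element `y_i = A_i δ_{s_i} + B_i` of the twisted group
algebra, where `ι : K → D` is the embedding of the coefficients and `δ` is `w ↦ δ_w`. -/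
noncomputable def yElt {r : ℕ} {W : Type*} [Group W] {M : CoxeterMatrix (Fin r)}
    (cs : CoxeterSystem M W) {Λ : Type*} [AddCommGroup Λ] {K : Type*} [Field K]
    (exp : Multiplicative Λ →* Kˣ) (t1 t2 : K) (α : Fin r → Λ)
    {D : Type*} [Ring D] (ι : K →+* D) (δ : W → D) (i : Fin r) : D :=
  ι (Acoef exp t1 t2 (α i)) * δ (cs.simple i) + ι (Bcoef exp t1 t2 (α i))

/-- `A(w) = ∏_{β ∈ R(w)} (t1 + t2 e^{-β})/(1 - e^{β})`, computed as the product over the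
inversions `β_j = s_{i_1} ⋯ s_{i_{j-1}}(α_{i_j})` attached to a (reduced) word `l` for `w`. -/
noncomputable def Aword {r : ℕ} {W : Type*} [Group W] {M : CoxeterMatrix (Fin r)}
    (cs : CoxeterSystem M W) {Λ : Type*} [AddCommGroup Λ] (wΛ : W →* AddAut Λ)
    (α : Fin r → Λ) {K : Type*} [Field K] (exp : Multiplicative Λ →* Kˣ) (t1 t2 : K)
    (l : List (Fin r)) : K :=
  ∏ j : Fin l.length, Acoef exp t1 t2 (wΛ (cs.wordProd (l.take j)) (α (l.get j)))

lemma field_id1 {K : Type*} [Field K] (t1 t2 u : K) (hu0 : u ≠ 0) (hu1 : u ≠ 1) :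
    (t1 + t2 * u⁻¹) / (1 - u) * ((t1 + t2) / (1 - u))
      + (t1 + t2) / (1 - u⁻¹) * ((t1 + t2 * u⁻¹) / (1 - u))
      = (t1 + t2) * ((t1 + t2 * u⁻¹) / (1 - u)) := by
  have h1 : 1 - u ≠ 0 := sub_ne_zero_of_ne (Ne.symm hu1)
  have h2 : 1 - u⁻¹ = (u - 1) / u := by field_simp
  rw [h2]
  have h3 : u - 1 ≠ 0 := sub_ne_zero_of_ne hu1
  field_simp
  ring

lemma field_id2 {K : Type*} [Field K] (t1 t2 u : K) (hu0 : u ≠ 0) (hu1 : u ≠ 1) :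
    (t1 + t2 * u⁻¹) / (1 - u) * ((t1 + t2 * u) / (1 - u⁻¹))
      + (t1 + t2) / (1 - u⁻¹) * ((t1 + t2) / (1 - u⁻¹))
      = (t1 + t2) * ((t1 + t2) / (1 - u⁻¹)) - t1 * t2 := by
  have h1 : 1 - u ≠ 0 := sub_ne_zero_of_ne (Ne.symm hu1)
  have h2 : 1 - u⁻¹ = (u - 1) / u := by field_simp
  rw [h2]
  have h3 : u - 1 ≠ 0 := sub_ne_zero_of_ne hu1
  field_simp
  ring

lemma ring_expand {K D : Type*} [CommRing K] [Ring D] (ι : K →+* D) (A B A' B' : K) (d : D)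
    (hda : d * ι A = ι A' * d) (hdb : d * ι B = ι B' * d) (hdd : d * d = 1) :
    (ι A * d + ι B) * (ι A * d + ι B)
      = ι (A * B' + B * A) * d + ι (A * A' + B * B) := by
  have h1 : ι A * d * (ι A * d) = ι (A * A') := by
    rw [mul_assoc, ← mul_assoc d, hda, mul_assoc, hdd, mul_one, ← map_mul]
  have h2 : ι A * d * ι B = ι (A * B') * d := by
    rw [mul_assoc, hdb, ← mul_assoc, ← map_mul]
  have h3 : ι B * (ι A * d) = ι (B * A) * d := by rw [← mul_assoc, ← map_mul]
  have h4 : ι B * ι B = ι (B * B) := (map_mul ι B B).symm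
  rw [add_mul, mul_add, mul_add, h1, h2, h3, h4, map_add, map_add, add_mul]
  abel

lemma Aword_concat' {r : ℕ} {W : Type*} [Group W] {M : CoxeterMatrix (Fin r)}
    (cs : CoxeterSystem M W) {Λ : Type*} [AddCommGroup Λ] (wΛ : W →* AddAut Λ)
    (α : Fin r → Λ) {K : Type*} [Field K] (exp : Multiplicative Λ →* Kˣ) (t1 t2 : K)
    (l : List (Fin r)) (i : Fin r) :
    Aword cs wΛ α exp t1 t2 (l ++ [i])
      = Aword cs wΛ α exp t1 t2 l * Acoef exp t1 t2 (wΛ (cs.wordProd l) (α i)) := by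
  unfold Aword
  have hlen : l.length + 1 = (l ++ [i]).length := by simp
  rw [← Fin.prod_congr' _ hlen, Fin.prod_univ_castSucc]
  congr 1
  · refine Finset.prod_congr rfl fun j _ => ?_
    have hval : ((Fin.cast hlen j.castSucc) : ℕ) = (j : ℕ) := rfl
    have ht : (l ++ [i]).take ((Fin.cast hlen j.castSucc) : ℕ) = l.take (j : ℕ) := by
      rw [hval]; exact List.take_append_of_le_length (le_of_lt j.isLt)
    have hg : (l ++ [i]).get (Fin.cast hlen j.castSucc) = l.get j := by
      simp only [List.get_eq_getElem, hval]
      exact List.getElem_append_left j.isLt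
    rw [ht, hg]
  · have hval : ((Fin.cast hlen (Fin.last l.length)) : ℕ) = l.length := rfl
    have ht : (l ++ [i]).take ((Fin.cast hlen (Fin.last l.length)) : ℕ) = l := by
      rw [hval]; exact List.take_left (l₁ := l) (l₂ := [i])
    have hg : (l ++ [i]).get (Fin.cast hlen (Fin.last l.length)) = i := by
      simp only [List.get_eq_getElem, hval]
      simp
    rw [ht, hg]

/-- `Δ_w = ∑_{u ≤ w} p(u,w) y_u` in the twisted group algebra, where
`Δ_w = A(w) δ_w` and `A(w) = ∏_{β ∈ R(w)} (t1 + t2 e^{-β})/(1 - e^{β})` (computed along any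
reduced word `l` for `w`); equivalently, the `Q_{t1,t2}(Λ)`-module isomorphism `Φ` with
`Φ(y_w) = h_w` satisfies `Φ(Δ_w) = Y_w`, i.e. the coefficients of `Δ_w` in the basis
`{y_u}` are the Yang–Baxter coefficients `p(u,w)`. -/
theorem delta_eq_sum_pCoeff_y
    {r : ℕ} {W : Type*} [Group W] [Fintype W] {M : CoxeterMatrix (Fin r)}
    (cs : CoxeterSystem M W)
    {Λ : Type*} [AddCommGroup Λ] (wΛ : W →* AddAut Λ) (α : Fin r → Λ)
    (coroot : Fin r → (Λ →+ ℤ))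
    (hact : ∀ (i : Fin r) (lam : Λ), wΛ (cs.simple i) lam = lam - (coroot i lam) • α i)
    (hαα : ∀ i : Fin r, coroot i (α i) = 2)
    (hindep : LinearIndependent ℤ α)
    (hcart : ∀ i j : Fin r, i ≠ j →
      (M.M i j = 2 ∧ coroot i (α j) = 0 ∧ coroot j (α i) = 0) ∨
      (M.M i j = 3 ∧ coroot i (α j) = -1 ∧ coroot j (α i) = -1) ∨
      (M.M i j = 4 ∧ coroot i (α j) * coroot j (α i) = 2 ∧
        coroot i (α j) < 0 ∧ coroot j (α i) < 0) ∨
      (M.M i j = 6 ∧ coroot i (α j) * coroot j (α i) = 3 ∧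
        coroot i (α j) < 0 ∧ coroot j (α i) < 0))
    {K : Type*} [Field K] (exp : Multiplicative Λ →* Kˣ)
    (hexp_inj : Function.Injective exp)
    (t1 t2 : K) (wK : W →* RingAut K)
    (hwexp : ∀ (w : W) (lam : Λ),
      wK w ((exp (Multiplicative.ofAdd lam) : Kˣ) : K)
        = ((exp (Multiplicative.ofAdd (wΛ w lam)) : Kˣ) : K))
    (hwt1 : ∀ w : W, wK w t1 = t1) (hwt2 : ∀ w : W, wK w t2 = t2)
    {H : Type*} [Ring H] [Algebra K H]
    (h : W → H) (hb : Module.Basis W K H)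
    (hbasis : ∀ w : W, hb w = h w)
    (hone : h 1 = 1)
    (hmul : ∀ u v : W, cs.length (u * v) = cs.length u + cs.length v →
      h (u * v) = h u * h v)
    (hquad : ∀ i : Fin r,
      (h (cs.simple i) - algebraMap K H t1) * (h (cs.simple i) - algebraMap K H t2) = 0)
    (Y : W → H) (hY1 : Y 1 = 1)
    (hYrec : ∀ (w : W) (i : Fin r), cs.length (w * cs.simple i) = cs.length w + 1 →
      Y (w * cs.simple i)
        = Y w * (h (cs.simple i) + algebraMap K H ((t1 + t2) / wK w (Eelt exp (α i)))))
    {D : Type*} [Ring D] (ι : K →+* D) (δ : W → D)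
    (hδ1 : δ 1 = 1)
    (hδmul : ∀ u v : W, δ (u * v) = δ u * δ v)
    (hδcomm : ∀ (w : W) (c : K), δ w * ι c = ι (wK w c) * δ w)
    (hδindep : ∀ f : W → K, (∑ w : W, ι (f w) * δ w) = 0 → ∀ w, f w = 0)
    (yD : W → D) (hyD_one : yD 1 = 1)
    (hyD_rec : ∀ (w : W) (i : Fin r), cs.length (w * cs.simple i) = cs.length w + 1 →
      yD (w * cs.simple i) = yD w * yElt cs exp t1 t2 α ι δ i)
    (w : W) (l : List (Fin r)) (hl : cs.wordProd l = w) (hred : cs.IsReduced l) :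
    ι (Aword cs wΛ α exp t1 t2 l) * δ w = ∑ u : W, ι (pCoeff hb Y u w) * yD u := by
  subst hl
  -- basic facts about exp
  have hαne : ∀ i : Fin r, α i ≠ 0 := by
    intro i hzero
    have h2 := hαα i
    rw [hzero, map_zero] at h2
    exact absurd h2 (by norm_num)
  have hne1 : ∀ a : Λ, a ≠ 0 → ((exp (Multiplicative.ofAdd a) : Kˣ) : K) ≠ 1 := by
    intro a ha hcontra
    apply ha
    have hu : exp (Multiplicative.ofAdd a) = 1 := Units.ext (by simpa using hcontra)
    have h0 : exp (Multiplicative.ofAdd a) = exp (Multiplicative.ofAdd (0 : Λ)) := by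
      rw [hu]; simp
    have := hexp_inj h0
    simpa using this
  have hinvK : ∀ a : Λ, ((exp (Multiplicative.ofAdd (-a)) : Kˣ) : K)
      = (((exp (Multiplicative.ofAdd a) : Kˣ) : K))⁻¹ := by
    intro a
    have h0 : Multiplicative.ofAdd (-a) = (Multiplicative.ofAdd a)⁻¹ := rfl
    rw [h0, map_inv]
    exact Units.val_inv_eq_inv_val _
  -- compatibility of wK with Acoef, Bcoef, Eelt
  have hwA : ∀ (v : W) (a : Λ), wK v (Acoef exp t1 t2 a) = Acoef exp t1 t2 (wΛ v a) := by
    intro v a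
    have h1 : wΛ v (-a) = -(wΛ v a) := map_neg _ a
    unfold Acoef
    rw [map_div₀]
    congr 1
    · rw [map_add, hwt1, map_mul, hwt2, hwexp, h1]
    · rw [map_sub, map_one, hwexp]
  have hwB : ∀ (v : W) (a : Λ), wK v (Bcoef exp t1 t2 a) = Bcoef exp t1 t2 (wΛ v a) := by
    intro v a
    have h1 : wΛ v (-a) = -(wΛ v a) := map_neg _ a
    unfold Bcoef
    rw [map_div₀]
    congr 1
    · rw [map_add, hwt1, hwt2]
    · rw [map_sub, map_one, hwexp, h1]
  have hwE : ∀ (v : W) (a : Λ), wK v (Eelt exp a) = Eelt exp (wΛ v a) := by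
    intro v a
    have h1 : wΛ v (-a) = -(wΛ v a) := map_neg _ a
    unfold Eelt
    rw [map_sub, map_one, hwexp, h1]
  have hsα : ∀ i : Fin r, wΛ (cs.simple i) (α i) = -(α i) := by
    intro i
    rw [hact, hαα]
    have : (2 : ℤ) • α i = α i + α i := two_zsmul _
    rw [this]
    abel
  -- invariance of t1+t2 and t1*t2
  have hcsum : ∀ v : W, wK v (t1 + t2) = t1 + t2 := fun v => by
    rw [map_add, hwt1, hwt2]
  have hcprod : ∀ v : W, wK v (t1 * t2) = t1 * t2 := fun v => by
    rw [map_mul, hwt1, hwt2]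
  -- quadratic relation for y_i in D
  have hyquad : ∀ i : Fin r, yElt cs exp t1 t2 α ι δ i * yElt cs exp t1 t2 α ι δ i
      = ι (t1 + t2) * yElt cs exp t1 t2 α ι δ i - ι (t1 * t2) := by
    intro i
    have hda : δ (cs.simple i) * ι (Acoef exp t1 t2 (α i))
        = ι (Acoef exp t1 t2 (-(α i))) * δ (cs.simple i) := by
      rw [hδcomm, hwA, hsα]
    have hdb : δ (cs.simple i) * ι (Bcoef exp t1 t2 (α i))
        = ι (Bcoef exp t1 t2 (-(α i))) * δ (cs.simple i) := by
      rw [hδcomm, hwB, hsα]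
    have hdd : δ (cs.simple i) * δ (cs.simple i) = 1 := by
      rw [← hδmul, cs.simple_mul_simple_self, hδ1]
    unfold yElt
    rw [ring_expand ι _ _ _ _ _ hda hdb hdd]
    rw [mul_add, ← mul_assoc, ← map_mul, ← map_mul]
    set u : K := ((exp (Multiplicative.ofAdd (α i)) : Kˣ) : K) with hu
    have hu0 : u ≠ 0 := Units.ne_zero _
    have hu1 : u ≠ 1 := hne1 (α i) (hαne i)
    have hAv : Acoef exp t1 t2 (α i) = (t1 + t2 * u⁻¹) / (1 - u) := by
      unfold Acoef; rw [hinvK]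
    have hA'v : Acoef exp t1 t2 (-(α i)) = (t1 + t2 * u) / (1 - u⁻¹) := by
      unfold Acoef; rw [neg_neg, hinvK]
    have hBv : Bcoef exp t1 t2 (α i) = (t1 + t2) / (1 - u⁻¹) := by
      unfold Bcoef; rw [hinvK]
    have hB'v : Bcoef exp t1 t2 (-(α i)) = (t1 + t2) / (1 - u) := by
      unfold Bcoef; rw [neg_neg]
    have e1 : Acoef exp t1 t2 (α i) * Bcoef exp t1 t2 (-(α i))
        + Bcoef exp t1 t2 (α i) * Acoef exp t1 t2 (α i)
        = (t1 + t2) * Acoef exp t1 t2 (α i) := by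
      rw [hAv, hBv, hB'v]; exact field_id1 t1 t2 u hu0 hu1
    have e2 : Acoef exp t1 t2 (α i) * Acoef exp t1 t2 (-(α i))
        + Bcoef exp t1 t2 (α i) * Bcoef exp t1 t2 (α i)
        = (t1 + t2) * Bcoef exp t1 t2 (α i) - t1 * t2 := by
      rw [hAv, hA'v, hBv]; exact field_id2 t1 t2 u hu0 hu1
    rw [e1, e2, map_sub, add_sub_assoc]
  -- y_i commutes with invariant scalars
  have hycomm : ∀ (c : K), (∀ v : W, wK v c = c) → ∀ i : Fin r,
      yElt cs exp t1 t2 α ι δ i * ι c = ι c * yElt cs exp t1 t2 α ι δ i := by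
    intro c hc i
    unfold yElt
    rw [add_mul, mul_assoc, hδcomm, hc, ← mul_assoc, ← map_mul, ← map_mul,
      mul_comm (Acoef exp t1 t2 (α i)) c, mul_comm (Bcoef exp t1 t2 (α i)) c,
      map_mul, map_mul, mul_assoc, ← mul_add]
  -- yD commutes with invariant scalars
  have hDcomm : ∀ (c : K), (∀ v : W, wK v c = c) → ∀ u : W,
      yD u * ι c = ι c * yD u := by
    intro c hc
    have key : ∀ l' : List (Fin r), cs.IsReduced l' →
        yD (cs.wordProd l') * ι c = ι c * yD (cs.wordProd l') := by
      intro l'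
      induction l' using List.reverseRecOn with
      | nil => intro _; rw [cs.wordProd_nil, hyD_one, one_mul, mul_one]
      | append_singleton l' i ih =>
        intro hred'
        have hl'' : cs.IsReduced l' := by
          have := hred'.take l'.length
          rwa [List.take_left] at this
        have hl2 : cs.length (cs.wordProd l') = l'.length := hl''
        have hl3 : cs.length (cs.wordProd (l' ++ [i])) = l'.length + 1 := by
          have h0 : cs.length (cs.wordProd (l' ++ [i])) = (l' ++ [i]).length := hred'
          simpa using h0
        rw [cs.wordProd_append, cs.wordProd_singleton] at hl3 ⊢
        have hlen : cs.length (cs.wordProd l' * cs.simple i)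
            = cs.length (cs.wordProd l') + 1 := by rw [hl3, hl2]
        rw [hyD_rec _ i hlen, mul_assoc, hycomm c hc i, ← mul_assoc, ih hl'', mul_assoc]
    intro u
    obtain ⟨l', h1, rfl⟩ := cs.exists_reduced_word' u
    exact key l' h1
  -- descent bookkeeping
  have hdesc : ∀ (u : W) (i : Fin r), cs.length (u * cs.simple i) ≠ cs.length u + 1 →
      cs.length ((u * cs.simple i) * cs.simple i) = cs.length (u * cs.simple i) + 1 := by
    intro u i hne'
    have huu : (u * cs.simple i) * cs.simple i = u := by
      rw [mul_assoc, cs.simple_mul_simple_self, mul_one]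
    rw [huu]
    rcases cs.length_mul_simple u i with hcase | hcase
    · exact absurd hcase hne'
    · have h0 : cs.length u ≠ 0 := by
        intro h0
        have hu1 : u = 1 := cs.length_eq_zero_iff.mp h0
        rw [hu1, one_mul, cs.length_simple, cs.length_one] at hcase
        omega
      omega
  -- down-case for yD
  have hyDdown : ∀ (u : W) (i : Fin r), cs.length (u * cs.simple i) ≠ cs.length u + 1 →
      yD u * yElt cs exp t1 t2 α ι δ i
        = ι (t1 + t2) * yD u - ι (t1 * t2) * yD (u * cs.simple i) := by
    intro u i hne'
    have huu : (u * cs.simple i) * cs.simple i = u := by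
      rw [mul_assoc, cs.simple_mul_simple_self, mul_one]
    have hrec := hyD_rec (u * cs.simple i) i (hdesc u i hne')
    rw [huu] at hrec
    rw [hrec, mul_assoc, hyquad i, mul_sub, ← mul_assoc,
      hDcomm (t1 + t2) hcsum (u * cs.simple i), mul_assoc, ← hrec,
      ← hDcomm (t1 * t2) hcprod (u * cs.simple i)]
  -- H side
  have hsq : ∀ i : Fin r, h (cs.simple i) * h (cs.simple i)
      = algebraMap K H (t1 + t2) * h (cs.simple i) - algebraMap K H (t1 * t2) := by
    intro i
    have e0 := hquad i
    rw [sub_mul, mul_sub, mul_sub] at e0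
    have e1 : h (cs.simple i) * h (cs.simple i) - h (cs.simple i) * algebraMap K H t2
        = algebraMap K H t1 * h (cs.simple i) - algebraMap K H t1 * algebraMap K H t2 :=
      sub_eq_zero.mp e0
    have e2 : h (cs.simple i) * h (cs.simple i)
        = algebraMap K H t1 * h (cs.simple i) - algebraMap K H t1 * algebraMap K H t2
          + h (cs.simple i) * algebraMap K H t2 := by
      rw [← e1]; abel
    have hc2 : h (cs.simple i) * algebraMap K H t2 = algebraMap K H t2 * h (cs.simple i) :=
      (Algebra.commutes t2 _).symm
    rw [map_add, map_mul, add_mul, e2, hc2]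
    abel
  have hupH : ∀ (u : W) (i : Fin r), cs.length (u * cs.simple i) = cs.length u + 1 →
      h u * h (cs.simple i) = h (u * cs.simple i) := by
    intro u i hlen
    exact (hmul u (cs.simple i) (by rw [cs.length_simple]; exact hlen)).symm
  have hdownH : ∀ (u : W) (i : Fin r), cs.length (u * cs.simple i) ≠ cs.length u + 1 →
      h u * h (cs.simple i)
        = algebraMap K H (t1 + t2) * h u - algebraMap K H (t1 * t2) * h (u * cs.simple i) := by
    intro u i hne'
    have huu : (u * cs.simple i) * cs.simple i = u := by
      rw [mul_assoc, cs.simple_mul_simple_self, mul_one]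
    have hrec := hupH (u * cs.simple i) i (hdesc u i hne')
    rw [huu] at hrec
    have c1 : h (u * cs.simple i) * (algebraMap K H (t1 + t2) * h (cs.simple i))
        = algebraMap K H (t1 + t2) * (h (u * cs.simple i) * h (cs.simple i)) := by
      rw [← mul_assoc, ← Algebra.commutes (t1 + t2) (h (u * cs.simple i)), mul_assoc]
    have c2 : h (u * cs.simple i) * algebraMap K H (t1 * t2)
        = algebraMap K H (t1 * t2) * h (u * cs.simple i) :=
      (Algebra.commutes _ _).symm
    rw [← hrec, mul_assoc, hsq i, mul_sub, c1, c2, hrec]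
  -- the transfer map Ψ
  let PsiA : H →+ D :=
    { toFun := fun x => ∑ u : W, ι (hb.repr x u) * yD u
      map_zero' := by simp
      map_add' := by
        intro x y
        have hrepr : ∀ u : W, hb.repr (x + y) u = hb.repr x u + hb.repr y u := fun u => by
          rw [map_add]; rfl
        simp only [hrepr]
        rw [← Finset.sum_add_distrib]
        refine Finset.sum_congr rfl fun u _ => ?_
        rw [map_add, add_mul] }
  have Psi_smul : ∀ (c : K) (x : H), PsiA (c • x) = ι c * PsiA x := by
    intro c x
    show (∑ u : W, ι (hb.repr (c • x) u) * yD u) = ι c * ∑ u : W, ι (hb.repr x u) * yD u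
    rw [Finset.mul_sum]
    refine Finset.sum_congr rfl fun u _ => ?_
    rw [map_smul, Finsupp.smul_apply, smul_eq_mul, map_mul, mul_assoc]
  have Psi_basis : ∀ u : W, PsiA (hb u) = yD u := by
    intro u
    show (∑ v : W, ι (hb.repr (hb u) v) * yD v) = yD u
    rw [Module.Basis.repr_self]
    rw [Finset.sum_eq_single u]
    · rw [Finsupp.single_eq_same, map_one, one_mul]
    · intro v _ hv
      rw [Finsupp.single_eq_of_ne hv, map_zero, zero_mul]
    · intro habs; exact absurd (Finset.mem_univ u) habs
  have Psi_basis_mul : ∀ (u : W) (i : Fin r),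
      PsiA (hb u * h (cs.simple i)) = yD u * yElt cs exp t1 t2 α ι δ i := by
    intro u i
    by_cases hlen : cs.length (u * cs.simple i) = cs.length u + 1
    · rw [hbasis, hupH u i hlen, ← hbasis, Psi_basis, hyD_rec u i hlen]
    · rw [hbasis, hdownH u i hlen, ← Algebra.smul_def, ← Algebra.smul_def,
        ← hbasis u, ← hbasis (u * cs.simple i), map_sub, Psi_smul, Psi_smul,
        Psi_basis, Psi_basis]
      exact (hyDdown u i hlen).symm
  have Psi_mul : ∀ (x : H) (i : Fin r),
      PsiA (x * h (cs.simple i)) = PsiA x * yElt cs exp t1 t2 α ι δ i := by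
    intro x i
    calc PsiA (x * h (cs.simple i))
        = PsiA ((∑ u : W, hb.repr x u • hb u) * h (cs.simple i)) := by rw [hb.sum_repr]
      _ = ∑ u : W, PsiA ((hb.repr x u • hb u) * h (cs.simple i)) := by
          rw [Finset.sum_mul, map_sum]
      _ = ∑ u : W, ι (hb.repr x u) * (yD u * yElt cs exp t1 t2 α ι δ i) := by
          refine Finset.sum_congr rfl fun u _ => ?_
          rw [smul_mul_assoc, Psi_smul, Psi_basis_mul]
      _ = PsiA x * yElt cs exp t1 t2 α ι δ i := by
          show _ = (∑ u : W, ι (hb.repr x u) * yD u) * _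
          rw [Finset.sum_mul]
          exact Finset.sum_congr rfl fun u _ => (mul_assoc _ _ _).symm
  -- main induction
  have main : ∀ l' : List (Fin r), cs.IsReduced l' →
      ι (Aword cs wΛ α exp t1 t2 l') * δ (cs.wordProd l') = PsiA (Y (cs.wordProd l')) := by
    intro l'
    induction l' using List.reverseRecOn with
    | nil =>
      intro _
      rw [cs.wordProd_nil]
      have hA : Aword cs wΛ α exp t1 t2 ([] : List (Fin r)) = 1 := by
        simp [Aword]
      rw [hA, map_one, hδ1, mul_one, hY1, ← hone, ← hbasis, Psi_basis, hyD_one]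
    | append_singleton l' i ih =>
      intro hred'
      have hl'' : cs.IsReduced l' := by
        have := hred'.take l'.length
        rwa [List.take_left] at this
      have hl2 : cs.length (cs.wordProd l') = l'.length := hl''
      have hl3 : cs.length (cs.wordProd (l' ++ [i])) = l'.length + 1 := by
        have h0 : cs.length (cs.wordProd (l' ++ [i])) = (l' ++ [i]).length := hred'
        simpa using h0
      rw [cs.wordProd_append, cs.wordProd_singleton] at hl3 ⊢
      have hlen : cs.length (cs.wordProd l' * cs.simple i)
          = cs.length (cs.wordProd l') + 1 := by rw [hl3, hl2]
      rw [Aword_concat']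
      set w' := cs.wordProd l' with hw'
      set c : K := (t1 + t2) / wK w' (Eelt exp (α i)) with hc
      have hsmul : Y w' * algebraMap K H c = c • Y w' := by
        rw [Algebra.smul_def]; exact (Algebra.commutes c _).symm
      rw [hYrec w' i hlen, mul_add, map_add, hsmul, Psi_smul, Psi_mul, ← ih hl'']
      have hδy : (ι (Aword cs wΛ α exp t1 t2 l') * δ w') * yElt cs exp t1 t2 α ι δ i
          = ι (Aword cs wΛ α exp t1 t2 l' * Acoef exp t1 t2 (wΛ w' (α i)))
              * δ (w' * cs.simple i)
            + ι (Aword cs wΛ α exp t1 t2 l' * Bcoef exp t1 t2 (wΛ w' (α i))) * δ w' := by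
        unfold yElt
        rw [mul_add]
        congr 1
        · rw [mul_assoc, ← mul_assoc (δ w'), hδcomm, hwA, ← mul_assoc, ← mul_assoc,
            ← map_mul, mul_assoc, ← hδmul]
        · rw [mul_assoc, hδcomm, hwB, ← mul_assoc, ← map_mul]
      rw [hδy]
      have hcB : ι (Aword cs wΛ α exp t1 t2 l' * Bcoef exp t1 t2 (wΛ w' (α i))) * δ w'
          + ι c * (ι (Aword cs wΛ α exp t1 t2 l') * δ w') = 0 := by
        rw [← mul_assoc, ← map_mul, ← add_mul, ← map_add]
        have hz : Aword cs wΛ α exp t1 t2 l' * Bcoef exp t1 t2 (wΛ w' (α i))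
            + c * Aword cs wΛ α exp t1 t2 l' = 0 := by
          rw [hc, hwE]
          unfold Bcoef Eelt
          set z : K := ((exp (Multiplicative.ofAdd (-(wΛ w' (α i)))) : Kˣ) : K) with hzdef
          have hneg : z - 1 = -(1 - z) := by ring
          rw [hneg, div_neg]
          ring
        rw [hz, map_zero, zero_mul]
      rw [add_assoc, hcB, add_zero]
  have hmain := main l hred
  rw [hmain]
  rfl
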